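/- Let w : [n] → ℝ be strictly positive with w([n]) = 1, let 0 < q < 1 with w(A) ≠ q for every A ⊆ [n], and let K = {A ⊆ [n] : w(A) < q} be the corresponding threshold complex (assumed proper and without ghost vertices). Then the pair x, y : [n] → ℝ defined by x(i) = (1−q)·w(i) and y(i) = q·w(i) is a K-submodular function. -/
import Mathlib


open Finset

/-- A simplicial complex on `[n]`: a family of subsets containing `∅` and
closed under taking subsets. -/
def IsComplex (n : ℕ) (K : Set (Finset (Fin n))) : Prop :=
  ∅ ∈ K ∧ ∀ A B : Finset (Fin n), A ⊆ B → B ∈ K → A ∈ K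

/-- No ghost vertices: every singleton is a face. -/
def NoGhost (n : ℕ) (K : Set (Finset (Fin n))) : Prop :=
  ∀ i : Fin n, ({i} : Finset (Fin n)) ∈ K

/-- `K` is a threshold complex: there are strictly positive weights `w` and a
quota `q` with `A ∈ K ↔ w(A) < q`. -/
def IsThreshold (n : ℕ) (K : Set (Finset (Fin n))) : Prop :=
  ∃ (w : Fin n → ℝ) (q : ℝ), (∀ i, 0 < w i) ∧
    ∀ A : Finset (Fin n), A ∈ K ↔ ∑ i ∈ A, w i < q

/-- A K-submodular function: a pair of vectors `x y : [n] → ℝ` satisfying, for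
every ridge datum `[n] = X1 ⊔ {c1,c2} ⊔ X2` (so `X2 = (X1 ∪ {c1,c2})ᶜ`) with
`X1 ∈ K` and `X2 ∈ K°` (i.e. `X2ᶜ = X1 ∪ {c1,c2} ∉ K`):
the Λ-, V- and X-configuration inequalities. -/
def IsKSubmodular (n : ℕ) (K : Set (Finset (Fin n))) (x y : Fin n → ℝ) : Prop :=
  ∀ (X1 : Finset (Fin n)) (c1 c2 : Fin n),
    c1 ≠ c2 → c1 ∉ X1 → c2 ∉ X1 → X1 ∈ K → insert c1 (insert c2 X1) ∉ K →
    ((insert c1 X1 ∈ K → insert c2 X1 ∈ K →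
        ∑ i ∈ X1, x i + x c1 + x c2 > ∑ j ∈ (insert c1 (insert c2 X1))ᶜ, y j) ∧
     (insert c1 X1 ∉ K → insert c2 X1 ∉ K →
        ∑ j ∈ (insert c1 (insert c2 X1))ᶜ, y j + y c1 + y c2 > ∑ i ∈ X1, x i) ∧
     (insert c2 X1 ∈ K → insert c1 X1 ∉ K → x c2 + y c2 > 0))

/-- A non-strict K-submodular function: the Λ- and V-inequalities are non-strict,
and for X-configurations with distinguished element `c2` one requires
`x c2 > 0` and `y c2 > 0`. -/
def IsNonStrictKSubmodular (n : ℕ) (K : Set (Finset (Fin n))) (x y : Fin n → ℝ) : Prop :=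
  ∀ (X1 : Finset (Fin n)) (c1 c2 : Fin n),
    c1 ≠ c2 → c1 ∉ X1 → c2 ∉ X1 → X1 ∈ K → insert c1 (insert c2 X1) ∉ K →
    ((insert c1 X1 ∈ K → insert c2 X1 ∈ K →
        ∑ i ∈ X1, x i + x c1 + x c2 ≥ ∑ j ∈ (insert c1 (insert c2 X1))ᶜ, y j) ∧
     (insert c1 X1 ∉ K → insert c2 X1 ∉ K →
        ∑ j ∈ (insert c1 (insert c2 X1))ᶜ, y j + y c1 + y c2 ≥ ∑ i ∈ X1, x i) ∧
     (insert c2 X1 ∈ K → insert c1 X1 ∉ K → 0 < x c2 ∧ 0 < y c2))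

/-- `K` (the set of losing coalitions) is roughly weighted with strictly positive
weights `w` and quota `q > 0`. -/
def RoughlyWeighted (n : ℕ) (K : Set (Finset (Fin n))) (w : Fin n → ℝ) (q : ℝ) : Prop :=
  (∀ i, 0 < w i) ∧ 0 < q ∧ ∀ X : Finset (Fin n),
    (q < ∑ i ∈ X, w i → X ∉ K) ∧ (∑ i ∈ X, w i < q → X ∈ K)

/-- For strictly positive weights `w` with `w([n]) = 1`, a quota
`0 < q < 1` with `w(A) ≠ q` for all `A`, and the threshold complex
`K = {A : w(A) < q}` (assumed proper and without ghost vertices), the pair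
`x(i) = (1-q)·w(i)`, `y(i) = q·w(i)` is a K-submodular function. -/
theorem KSubmodular_of_threshold (n : ℕ) (w : Fin n → ℝ) (q : ℝ)
    (hw : ∀ i, 0 < w i) (hsum : ∑ i, w i = 1) (hq0 : 0 < q) (hq1 : q < 1)
    (hne : ∀ A : Finset (Fin n), ∑ i ∈ A, w i ≠ q)
    (K : Set (Finset (Fin n))) (hKdef : K = {A : Finset (Fin n) | ∑ i ∈ A, w i < q})
    (hproper : K ≠ Set.univ) (hghost : NoGhost n K) :
    IsKSubmodular n K (fun i => (1 - q) * w i) (fun i => q * w i) := by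
  intro X1 c1 c2 h12 h1 h2 hX1 hnot
  subst hKdef
  simp only [Set.mem_setOf_eq] at hX1 hnot
  push_neg at hnot
  have hc1 : c1 ∉ insert c2 X1 := by simp [h12, h1]
  have hsA : ∑ i ∈ insert c1 (insert c2 X1), w i = w c1 + w c2 + ∑ i ∈ X1, w i := by
    rw [Finset.sum_insert hc1, Finset.sum_insert h2]; ring
  have hSgt : q < ∑ i ∈ insert c1 (insert c2 X1), w i :=
    lt_of_le_of_ne hnot (hne _).symm
  have hcompl : ∑ j ∈ (insert c1 (insert c2 X1))ᶜ, w j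
      = 1 - ∑ i ∈ insert c1 (insert c2 X1), w i := by
    have h := Finset.sum_add_sum_compl (insert c1 (insert c2 X1)) w
    rw [hsum] at h; linarith
  refine ⟨?_, ?_, ?_⟩
  · intro _ _
    simp only [← Finset.mul_sum]
    nlinarith [hX1, hSgt, hsA, hcompl]
  · intro _ _
    simp only [← Finset.mul_sum]
    nlinarith [hX1, hSgt, hsA, hcompl]
  · intro _ _
    simp only
    nlinarith [hw c2]
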